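/- Let Σ be an alphabet. (i) If R₀ and R₁ are regular expressions over Σ and s is a string of length ℓ ≥ 1 such that L(R₀) and L(R₁) each contain at least one string of length ℓ, then MaxSim([R₀ | R₁], s) = max(MaxSim(R₀, s), MaxSim(R₁, s)). (ii) If R₀ and R₁ are regular expressions whose languages are nonempty and contain only strings of lengths ℓ₀ ≥ 1 and ℓ₁ ≥ 1 respectively, and s₀, s₁ are strings of lengths ℓ₀ and ℓ₁, then MaxSim(R₀ ∘ R₁, s₀s₁) = (ℓ₀·MaxSim(R₀, s₀) + ℓ₁·MaxSim(R₁, s₁))/(ℓ₀ + ℓ₁), where R₀ ∘ R₁ denotes concatenation and s₀s₁ the concatenated string. -/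

import Mathlib

/-- The length (size) of a regular expression: number of symbols/operators. -/
def reSize {α : Type} : RegularExpression α → ℕ
  | RegularExpression.zero => 1
  | RegularExpression.epsilon => 1
  | RegularExpression.char _ => 1
  | RegularExpression.plus r s => reSize r + reSize s + 1
  | RegularExpression.comp r s => reSize r + reSize s + 1
  | RegularExpression.star r => reSize r + 1

/-- Hamming similarity of two lists (of equal length `n ≥ 1`): the fraction of
positions at which they agree. -/
def hamSim {α : Type} [DecidableEq α] (x y : List α) : ℚ :=
  ((x.zip y).countP fun p => decide (p.1 = p.2)) / x.length

/-- `maxSim R b`: the maximum Hamming similarity `HamSim(x, b)` over strings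
`x ∈ L(R)` of length `|b|` (as a supremum in `ℝ`; the set of attained values is
finite, so the supremum is the maximum whenever such an `x` exists). -/
noncomputable def maxSim {α : Type} [DecidableEq α] (R : RegularExpression α)
    (b : List α) : ℝ :=
  sSup {q : ℝ | ∃ x ∈ R.matches', x.length = b.length ∧ (hamSim x b : ℝ) = q}


section AuxMaxSim
variable {α : Type} [DecidableEq α]

def simSet (R : RegularExpression α) (b : List α) : Set ℝ :=
  {q : ℝ | ∃ x ∈ R.matches', x.length = b.length ∧ (hamSim x b : ℝ) = q}

lemma maxSim_eq_sSup (R : RegularExpression α) (b : List α) :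
    maxSim R b = sSup (simSet R b) := rfl

lemma simSet_finite (R : RegularExpression α) (b : List α) : (simSet R b).Finite := by
  apply Set.Finite.subset (Set.Finite.image (fun k : ℕ => (k : ℝ) / b.length)
    (Set.finite_Iic b.length))
  rintro q ⟨x, _, hlen, rfl⟩
  refine ⟨(x.zip b).countP fun p => decide (p.1 = p.2), ?_, ?_⟩
  · simp only [Set.mem_Iic]
    calc (x.zip b).countP _ ≤ (x.zip b).length := List.countP_le_length
    _ ≤ b.length := by rw [List.length_zip, hlen]; omega
  · simp [hamSim, hlen]

lemma simSet_bdd (R : RegularExpression α) (b : List α) : BddAbove (simSet R b) :=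
  (simSet_finite R b).bddAbove

lemma hamSim_append {x₀ x₁ s₀ s₁ : List α} (h₀ : x₀.length = s₀.length)
    (h₁ : x₁.length = s₁.length) (n₀ : 1 ≤ s₀.length) (n₁ : 1 ≤ s₁.length) :
    (hamSim (x₀ ++ x₁) (s₀ ++ s₁) : ℝ) =
      ((s₀.length : ℝ) * hamSim x₀ s₀ + (s₁.length : ℝ) * hamSim x₁ s₁) /
        ((s₀.length : ℝ) + s₁.length) := by
  have e0 : (s₀.length : ℝ) ≠ 0 := by positivity
  have e1 : (s₁.length : ℝ) ≠ 0 := by positivity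
  simp only [hamSim, List.zip_append h₀, List.countP_append, List.length_append, h₀, h₁]
  push_cast
  field_simp

end AuxMaxSim

/-- (i) If `L(R₀)` and `L(R₁)` each contain a string of
length `ℓ = |s| ≥ 1`, then `MaxSim([R₀ | R₁], s) = max(MaxSim(R₀,s), MaxSim(R₁,s))`.
(ii) If `L(R₀)` and `L(R₁)` are nonempty and contain only strings of lengths
`ℓ₀ ≥ 1` and `ℓ₁ ≥ 1` respectively, and `|s₀| = ℓ₀`, `|s₁| = ℓ₁`, then
`MaxSim(R₀ ∘ R₁, s₀s₁) = (ℓ₀·MaxSim(R₀,s₀) + ℓ₁·MaxSim(R₁,s₁))/(ℓ₀+ℓ₁)`. -/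
theorem maxSim_plus_and_comp {α : Type} [DecidableEq α] :
    (∀ (R₀ R₁ : RegularExpression α) (s : List α) (ℓ : ℕ),
      1 ≤ ℓ → s.length = ℓ →
      (∃ x ∈ R₀.matches', x.length = ℓ) →
      (∃ x ∈ R₁.matches', x.length = ℓ) →
      maxSim (RegularExpression.plus R₀ R₁) s = max (maxSim R₀ s) (maxSim R₁ s)) ∧
    (∀ (R₀ R₁ : RegularExpression α) (ℓ₀ ℓ₁ : ℕ) (s₀ s₁ : List α),
      1 ≤ ℓ₀ → 1 ≤ ℓ₁ →
      (∃ x, x ∈ R₀.matches') → (∃ x, x ∈ R₁.matches') →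
      (∀ x ∈ R₀.matches', x.length = ℓ₀) →
      (∀ x ∈ R₁.matches', x.length = ℓ₁) →
      s₀.length = ℓ₀ → s₁.length = ℓ₁ →
      maxSim (RegularExpression.comp R₀ R₁) (s₀ ++ s₁) =
        ((ℓ₀ : ℝ) * maxSim R₀ s₀ + (ℓ₁ : ℝ) * maxSim R₁ s₁) / ((ℓ₀ : ℝ) + (ℓ₁ : ℝ))) := by
  constructor
  · rintro R₀ R₁ s ℓ hℓ hs ⟨x₀, hx₀, hl₀⟩ ⟨x₁, hx₁, hl₁⟩
    have hne₀ : (simSet R₀ s).Nonempty :=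
      ⟨(hamSim x₀ s : ℝ), x₀, hx₀, by rw [hl₀, hs], rfl⟩
    have hne₁ : (simSet R₁ s).Nonempty :=
      ⟨(hamSim x₁ s : ℝ), x₁, hx₁, by rw [hl₁, hs], rfl⟩
    have hset : simSet (RegularExpression.plus R₀ R₁) s = simSet R₀ s ∪ simSet R₁ s := by
      ext q
      constructor
      · rintro ⟨x, hx, hxl, rfl⟩
        have hx' : x ∈ R₀.matches' + R₁.matches' := hx
        rw [Language.mem_add] at hx'
        rcases hx' with h | h
        · exact Or.inl ⟨x, h, hxl, rfl⟩
        · exact Or.inr ⟨x, h, hxl, rfl⟩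
      · rintro (⟨x, hx, hxl, rfl⟩ | ⟨x, hx, hxl, rfl⟩)
        · exact ⟨x, Or.inl hx, hxl, rfl⟩
        · exact ⟨x, Or.inr hx, hxl, rfl⟩
    rw [maxSim_eq_sSup, maxSim_eq_sSup, maxSim_eq_sSup, hset,
      csSup_union (simSet_bdd R₀ s) hne₀ (simSet_bdd R₁ s) hne₁]
  · rintro R₀ R₁ ℓ₀ ℓ₁ s₀ s₁ hℓ₀ hℓ₁ ⟨x₀, hx₀⟩ ⟨x₁, hx₁⟩ hL₀ hL₁ hs₀ hs₁
    have n₀ : 1 ≤ s₀.length := by omega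
    have n₁ : 1 ≤ s₁.length := by omega
    have hne₀ : (simSet R₀ s₀).Nonempty :=
      ⟨(hamSim x₀ s₀ : ℝ), x₀, hx₀, by rw [hL₀ x₀ hx₀, hs₀], rfl⟩
    have hne₁ : (simSet R₁ s₁).Nonempty :=
      ⟨(hamSim x₁ s₁ : ℝ), x₁, hx₁, by rw [hL₁ x₁ hx₁, hs₁], rfl⟩
    set f : ℝ × ℝ → ℝ := fun p => ((ℓ₀ : ℝ) * p.1 + (ℓ₁ : ℝ) * p.2) / ((ℓ₀ : ℝ) + ℓ₁)
      with hf
    have hset : simSet (RegularExpression.comp R₀ R₁) (s₀ ++ s₁) =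
        f '' (simSet R₀ s₀ ×ˢ simSet R₁ s₁) := by
      ext q
      constructor
      · rintro ⟨x, hx, hxl, rfl⟩
        have hx' : x ∈ R₀.matches' * R₁.matches' := hx
        rw [Language.mem_mul] at hx'
        obtain ⟨a, ha, b, hb, rfl⟩ := hx'
        have hal : a.length = s₀.length := by rw [hL₀ a ha, hs₀]
        have hbl : b.length = s₁.length := by rw [hL₁ b hb, hs₁]
        refine ⟨((hamSim a s₀ : ℝ), (hamSim b s₁ : ℝ)),
          ⟨⟨a, ha, hal, rfl⟩, ⟨b, hb, hbl, rfl⟩⟩, ?_⟩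
        rw [hf]
        simp only
        rw [← hs₀, ← hs₁, ← hamSim_append hal hbl n₀ n₁]
      · rintro ⟨⟨u, v⟩, ⟨⟨a, ha, hal, rfl⟩, ⟨b, hb, hbl, rfl⟩⟩, rfl⟩
        refine ⟨a ++ b, ?_, ?_, ?_⟩
        · exact Language.mem_mul.mpr ⟨a, ha, b, hb, rfl⟩
        · simp [hal, hbl]
        · rw [hamSim_append hal hbl n₀ n₁, hf]
          simp only
          rw [hs₀, hs₁]
    have hM₀ : sSup (simSet R₀ s₀) ∈ simSet R₀ s₀ :=
      hne₀.csSup_mem (simSet_finite R₀ s₀)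
    have hM₁ : sSup (simSet R₁ s₁) ∈ simSet R₁ s₁ :=
      hne₁.csSup_mem (simSet_finite R₁ s₁)
    rw [maxSim_eq_sSup, maxSim_eq_sSup, maxSim_eq_sSup, hset]
    have hD : (0 : ℝ) < (ℓ₀ : ℝ) + ℓ₁ := by positivity
    apply le_antisymm
    · apply csSup_le ((hne₀.prod hne₁).image f)
      rintro q ⟨⟨u, v⟩, ⟨hu, hv⟩, rfl⟩
      rw [hf]
      simp only
      gcongr
      · exact le_csSup (simSet_bdd R₀ s₀) hu
      · exact le_csSup (simSet_bdd R₁ s₁) hv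
    · exact le_csSup (((simSet_finite R₀ s₀).prod (simSet_finite R₁ s₁)).image f).bddAbove
        ⟨(sSup (simSet R₀ s₀), sSup (simSet R₁ s₁)), ⟨hM₀, hM₁⟩, rfl⟩
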